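/- Let C = Σ_{n=1}^{M} c_n(x)Λ^{−n} be a matrix difference operator with only strictly negative powers of Λ, and let f, g : ℝ → M_N(ℂ). Then the nonnegative part of the composed operator f ∘ Δ ∘ g ∘ C equals f ∘ Δ ∘ C*(g), where C*(g) : ℝ → M_N(ℂ) is the function C*(g)(x) = Σ_{n=1}^{M} g(x+nε) c_n(x+nε). Equivalently, for every m ≥ 0 the coefficient of Λ^{m} in f ∘ Δ ∘ g ∘ C equals f(x) · C*(g)(x+mε). -/

import Mathlib

open Matrix

noncomputable section

/-- `N × N` complex matrices. -/
abbrev Mat (N : ℕ) := Matrix (Fin N) (Fin N) ℂ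

/-- A formal matrix difference operator `A = Σₖ aₖ(x) Λᵏ`, represented by its
family of coefficient functions: `A k x` is the coefficient of `Λᵏ` at the
point `x`.  `Λ` is the shift `(Λ g)(x) = g(x + ε)`. -/
abbrev DOp (N : ℕ) := ℤ → ℝ → Mat N

/-- Product of difference operators, determined by
`(a(x)Λⁱ)·(b(x)Λʲ) = a(x) b(x+iε) Λ^{i+j}`; the coefficient of `Λᵏ` in `A·B`
is `Σᶠ i, A i (x) * B (k−i) (x+iε)` (a finite sum in all cases considered). -/
noncomputable def opMul (ε : ℝ) {N : ℕ} (A B : DOp N) : DOp N :=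
  fun k x => ∑ᶠ i : ℤ, A i x * B (k - i) (x + (i : ℝ) * ε)

/-- A function `f : ℝ → Mat N`, viewed as the degree-zero operator `f(x)Λ⁰`. -/
def ofFun {N : ℕ} (f : ℝ → Mat N) : DOp N := fun k x => if k = 0 then f x else 0

/-- The negative part `A₋ = Σ_{k<0} aₖ Λᵏ`. -/
def opNegPart {N : ℕ} (A : DOp N) : DOp N := fun k x => if k < 0 then A k x else 0

/-- The nonnegative part `A₊ = Σ_{k≥0} aₖ Λᵏ`. -/
def opPosPart {N : ℕ} (A : DOp N) : DOp N := fun k x => if 0 ≤ k then A k x else 0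

/-!
STATEMENT 5: for a matrix difference operator `C = Σ_{n=1}^{M} cₙ(x)Λ⁻ⁿ` with only
strictly negative powers of `Λ` and functions `f, g : ℝ → Mat N`, the nonnegative
part of `f ∘ Δ ∘ g ∘ C` equals `f ∘ Δ ∘ C*(g)`, where `Δ = Σ_{s≥0} Λˢ` and
`C*(g)(x) = Σ_{n=1}^{M} g(x+nε) cₙ(x+nε)`; equivalently, for every `m ≥ 0` the
coefficient of `Λᵐ` in `f ∘ Δ ∘ g ∘ C` equals `f(x) · C*(g)(x+mε)`.
-/

theorem posPart_f_Delta_g_C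
    (ε : ℝ) (hε : 0 < ε) (N : ℕ) (hN : 1 ≤ N) (M : ℕ)
    (c : ℕ → ℝ → Mat N) (f g : ℝ → Mat N) :
    let C : DOp N := fun k x => if -(M : ℤ) ≤ k ∧ k ≤ -1 then c (-k).toNat x else 0
    let Del : DOp N := fun k _ => if 0 ≤ k then 1 else 0
    let Cstarg : ℝ → Mat N := fun x =>
      ∑ n ∈ Finset.Icc 1 M, g (x + (n : ℝ) * ε) * c n (x + (n : ℝ) * ε)
    opPosPart (opMul ε (opMul ε (opMul ε (ofFun f) Del) (ofFun g)) C)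
        = opMul ε (opMul ε (ofFun f) Del) (ofFun Cstarg)
      ∧ ∀ m : ℤ, 0 ≤ m → ∀ x : ℝ,
        opMul ε (opMul ε (opMul ε (ofFun f) Del) (ofFun g)) C m x
          = f x * Cstarg (x + (m : ℝ) * ε) := by
  intro C Del Cstarg
  -- Step 1: f ∘ Δ
  have hP : ∀ k x, opMul ε (ofFun f) Del k x = if 0 ≤ k then f x else 0 := by
    intro k x
    rw [opMul, finsum_eq_single _ (0 : ℤ) (fun i hi => by simp [ofFun, hi])]
    simp [ofFun, Del, mul_ite]
  -- Step 2: f ∘ Δ ∘ g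
  have hQ : ∀ k x, opMul ε (opMul ε (ofFun f) Del) (ofFun g) k x
      = if 0 ≤ k then f x * g (x + (k : ℝ) * ε) else 0 := by
    intro k x
    rw [opMul, finsum_eq_single _ k (fun i hi => by
      have : k - i ≠ 0 := sub_ne_zero.mpr (Ne.symm hi)
      simp [ofFun, this])]
    simp [ofFun, hP, ite_mul]
  -- Step 3: the coefficient formula
  have hR : ∀ m : ℤ, 0 ≤ m → ∀ x : ℝ,
      opMul ε (opMul ε (opMul ε (ofFun f) Del) (ofFun g)) C m x
        = f x * Cstarg (x + (m : ℝ) * ε) := by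
    intro m hm x
    rw [opMul]
    have hsupp : (Function.support fun i : ℤ =>
        opMul ε (opMul ε (ofFun f) Del) (ofFun g) i x * C (m - i) (x + (i : ℝ) * ε))
        ⊆ ((Finset.Icc 1 M).image (fun n : ℕ => m + (n : ℤ)) : Finset ℤ) := by
      intro i hi
      simp only [Function.mem_support] at hi
      by_cases h1 : -(M : ℤ) ≤ m - i ∧ m - i ≤ -1
      · simp only [Finset.coe_image, Set.mem_image, Finset.mem_coe, Finset.mem_Icc]
        refine ⟨(i - m).toNat, ⟨?_, ?_⟩, ?_⟩ <;> omega
      · exact absurd (by simp only [C]; rw [if_neg h1, mul_zero]) hi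
    rw [finsum_eq_finset_sum_of_support_subset _ hsupp,
      Finset.sum_image (by intro a _ b _ h; have h' : m + (a : ℤ) = m + (b : ℤ) := h; omega)]
    have : ∀ n ∈ Finset.Icc 1 M,
        opMul ε (opMul ε (ofFun f) Del) (ofFun g) (m + (n : ℤ)) x
          * C (m - (m + (n : ℤ))) (x + ((m + (n : ℤ) : ℤ) : ℝ) * ε)
        = f x * (g (x + (m : ℝ) * ε + (n : ℝ) * ε)
            * c n (x + (m : ℝ) * ε + (n : ℝ) * ε)) := by
      intro n hn
      simp only [Finset.mem_Icc] at hn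
      have h0 : (0 : ℤ) ≤ m + (n : ℤ) := by omega
      have hC : -(M : ℤ) ≤ m - (m + (n : ℤ)) ∧ m - (m + (n : ℤ)) ≤ -1 := by omega
      have htn : (-(m - (m + (n : ℤ)))).toNat = n := by omega
      have hx : x + ((m + (n : ℤ) : ℤ) : ℝ) * ε = x + (m : ℝ) * ε + (n : ℝ) * ε := by
        push_cast; ring
      rw [hQ, if_pos h0]
      simp only [C, if_pos hC, htn, hx, mul_assoc]
    rw [Finset.sum_congr rfl this, ← Finset.mul_sum]
  refine ⟨?_, hR⟩
  funext k x
  rw [opPosPart]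
  by_cases hk : 0 ≤ k
  · rw [if_pos hk, hR k hk x, opMul,
      finsum_eq_single _ k (fun i hi => by
        have : k - i ≠ 0 := sub_ne_zero.mpr (Ne.symm hi)
        simp [ofFun, this])]
    simp [ofFun, hP, hk, ite_mul]
  · rw [if_neg hk, opMul,
      finsum_eq_single _ k (fun i hi => by
        have : k - i ≠ 0 := sub_ne_zero.mpr (Ne.symm hi)
        simp [ofFun, this])]
    simp [ofFun, hP, hk]
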